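/- For all Hermitian 2×2 complex matrices X and Y: det(I + e^{X/2}·e^{Y}·e^{X/2}) ≥ det(I + e^{X+Y}) (both determinants are positive reals), and equality holds if and only if X·Y = Y·X. -/

import Mathlib

open Matrix MeasureTheory Filter Topology
open scoped ComplexOrder

/-- Functional calculus for a Hermitian complex matrix: apply `f : ℝ → ℝ` to the eigenvalues
(junk value `0` if the matrix is not Hermitian). -/
noncomputable def matCFC {n : ℕ} (f : ℝ → ℝ) (A : Matrix (Fin n) (Fin n) ℂ) :
    Matrix (Fin n) (Fin n) ℂ :=
  if h : A.IsHermitian then h.cfc f else 0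

/-- Functional-calculus logarithm of a (positive-definite Hermitian) matrix. -/
noncomputable def mlog {n : ℕ} (A : Matrix (Fin n) (Fin n) ℂ) : Matrix (Fin n) (Fin n) ℂ :=
  matCFC Real.log A

/-- Functional-calculus real power of a (positive-definite Hermitian) matrix. -/
noncomputable def mpow {n : ℕ} (A : Matrix (Fin n) (Fin n) ℂ) (q : ℝ) :
    Matrix (Fin n) (Fin n) ℂ :=
  matCFC (fun x => x ^ q) A

/-- Matrix exponential. -/
noncomputable def mexp {n : ℕ} (A : Matrix (Fin n) (Fin n) ℂ) : Matrix (Fin n) (Fin n) ℂ :=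
  NormedSpace.exp A

/-- Heisenberg evolution `τ^t(A) = e^{itH} A e^{-itH}`. -/
noncomputable def heisenberg {n : ℕ} (H : Matrix (Fin n) (Fin n) ℂ) (t : ℝ)
    (A : Matrix (Fin n) (Fin n) ℂ) : Matrix (Fin n) (Fin n) ℂ :=
  mexp ((Complex.I * t) • H) * A * mexp ((-(Complex.I * t)) • H)

/-- Schrödinger evolution of the state, `ω_t = e^{-itH} ω e^{itH}`. -/
noncomputable def stateT {n : ℕ} (H ω : Matrix (Fin n) (Fin n) ℂ) (t : ℝ) :
    Matrix (Fin n) (Fin n) ℂ :=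
  mexp ((-(Complex.I * t)) • H) * ω * mexp ((Complex.I * t) • H)

/-- Entropy production observable `σ = -i (H log ω - log ω H)`. -/
noncomputable def entropyProd {n : ℕ} (H ω : Matrix (Fin n) (Fin n) ℂ) :
    Matrix (Fin n) (Fin n) ℂ :=
  (-Complex.I) • (H * mlog ω - mlog ω * H)

/-- `σ_s = τ^s(σ)`. -/
noncomputable def sigmaAt {n : ℕ} (H ω : Matrix (Fin n) (Fin n) ℂ) (s : ℝ) :
    Matrix (Fin n) (Fin n) ℂ :=
  heisenberg H s (entropyProd H ω)

/-- `∫₀^t σ_s ds` (entrywise integral). -/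
noncomputable def intSigma {n : ℕ} (H ω : Matrix (Fin n) (Fin n) ℂ) (t : ℝ) :
    Matrix (Fin n) (Fin n) ℂ :=
  Matrix.of fun i j => ∫ s in (0:ℝ)..t, sigmaAt H ω s i j

/-- Mean entropy production rate `Σ^t = (1/t) ∫₀^t σ_s ds`. -/
noncomputable def meanSigma {n : ℕ} (H ω : Matrix (Fin n) (Fin n) ℂ) (t : ℝ) :
    Matrix (Fin n) (Fin n) ℂ :=
  ((t : ℂ)⁻¹) • intSigma H ω t

/-- The Evans–Searles functional `ES_t(α) = log tr(ω e^{-α ∫₀^t σ_s ds})`. -/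
noncomputable def ES {n : ℕ} (H ω : Matrix (Fin n) (Fin n) ℂ) (t α : ℝ) : ℝ :=
  Real.log ((Matrix.trace (ω * mexp ((-α) • intSigma H ω t))).re)

/-- The entropic pressure functional `e_{p,t}(α)` for `0 < p < ∞`. -/
noncomputable def ePressure {n : ℕ} (H ω : Matrix (Fin n) (Fin n) ℂ) (p t α : ℝ) : ℝ :=
  Real.log ((Matrix.trace (mpow
    (mpow ω ((1 - α)/p) * mpow (stateT H ω t) (2*α/p) * mpow ω ((1 - α)/p)) (p/2))).re)

/-- The entropic pressure functional `e_{∞,t}(α)`. -/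
noncomputable def ePressureInf {n : ℕ} (H ω : Matrix (Fin n) (Fin n) ℂ) (t α : ℝ) : ℝ :=
  Real.log ((Matrix.trace (mexp ((1 - α) • mlog ω + α • mlog (stateT H ω t)))).re)


lemma sinh_lt_mul_cosh {r : ℝ} (hr : 0 < r) : Real.sinh r < r * Real.cosh r := by
  have key : StrictMonoOn (fun x : ℝ => x * Real.cosh x - Real.sinh x) (Set.Ici 0) := by
    apply strictMonoOn_of_deriv_pos (convex_Ici 0)
    · fun_prop
    · intro x hx
      rw [interior_Ici, Set.mem_Ioi] at hx
      have h1 : HasDerivAt (fun x : ℝ => x * Real.cosh x - Real.sinh x)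
          (1 * Real.cosh x + x * Real.sinh x - Real.cosh x) x :=
        ((hasDerivAt_id x).mul (Real.hasDerivAt_cosh x)).sub (Real.hasDerivAt_sinh x)
      rw [h1.deriv]
      have := Real.sinh_pos_iff.2 hx
      nlinarith
  have := key (Set.self_mem_Ici) (Set.mem_Ici.2 hr.le) hr
  simpa using this

lemma strictConvexOn_cosh_sqrt :
    StrictConvexOn ℝ (Set.Ici 0) (fun x : ℝ => Real.cosh (Real.sqrt x)) := by
  have hderiv : ∀ x : ℝ, 0 < x →
      HasDerivAt (fun y : ℝ => Real.cosh (Real.sqrt y))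
        (Real.sinh (Real.sqrt x) * (2 * Real.sqrt x)⁻¹) x := by
    intro x hx
    simpa [one_div, Function.comp_def] using
      (Real.hasDerivAt_cosh (Real.sqrt x)).comp x (Real.hasDerivAt_sqrt hx.ne')
  apply strictConvexOn_of_deriv2_pos (convex_Ici 0)
  · exact (Real.continuous_cosh.comp Real.continuous_sqrt).continuousOn
  · intro x hx
    rw [interior_Ici, Set.mem_Ioi] at hx
    have hs : 0 < Real.sqrt x := Real.sqrt_pos.2 hx
    have hev : deriv (fun y : ℝ => Real.cosh (Real.sqrt y))
        =ᶠ[nhds x] (fun y : ℝ => Real.sinh (Real.sqrt y) * (2 * Real.sqrt y)⁻¹) := by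
      filter_upwards [eventually_gt_nhds hx] with y hy
      exact (hderiv y hy).deriv
    have h1 : HasDerivAt (fun y : ℝ => Real.sinh (Real.sqrt y))
        (Real.cosh (Real.sqrt x) * (1 / (2 * Real.sqrt x))) x :=
      (Real.hasDerivAt_sinh (Real.sqrt x)).comp x (Real.hasDerivAt_sqrt hx.ne')
    have h2 : HasDerivAt (fun y : ℝ => (2 * Real.sqrt y))
        (2 * (1 / (2 * Real.sqrt x))) x := (Real.hasDerivAt_sqrt hx.ne').const_mul 2
    have h3 : HasDerivAt (fun y : ℝ => (2 * Real.sqrt y)⁻¹)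
        (-(2 * (1 / (2 * Real.sqrt x))) / (2 * Real.sqrt x) ^ 2) x := h2.inv (by positivity)
    have hg := h1.mul h3
    have hd2 : deriv^[2] (fun x : ℝ => Real.cosh (Real.sqrt x)) x
        = Real.cosh (Real.sqrt x) * (1 / (2 * Real.sqrt x)) * (2 * Real.sqrt x)⁻¹
          + Real.sinh (Real.sqrt x)
            * (-(2 * (1 / (2 * Real.sqrt x))) / (2 * Real.sqrt x) ^ 2) := by
      show deriv (deriv _) x = _
      rw [hev.deriv_eq]
      exact hg.deriv
    have key : Real.cosh (Real.sqrt x) * (1 / (2 * Real.sqrt x)) * (2 * Real.sqrt x)⁻¹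
          + Real.sinh (Real.sqrt x)
            * (-(2 * (1 / (2 * Real.sqrt x))) / (2 * Real.sqrt x) ^ 2)
        = (Real.sqrt x * Real.cosh (Real.sqrt x) - Real.sinh (Real.sqrt x))
            / (4 * Real.sqrt x ^ 3) := by
      field_simp
      ring
    rw [hd2, key]
    exact div_pos (by linarith [sinh_lt_mul_cosh hs]) (by positivity)



lemma cosh_sq_arg (r : ℝ) : Real.cosh (Real.sqrt (r ^ 2)) = Real.cosh r := by
  rw [Real.sqrt_sq_eq_abs, Real.cosh_abs]

lemma core_ineq (α β t r : ℝ) (ht0 : 0 ≤ t) (ht1 : t ≤ 1)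
    (hr : r ^ 2 = (1 - t) * (α + β) ^ 2 + t * (α - β) ^ 2) :
    Real.cosh r ≤ (1 - t) * Real.cosh (α + β) + t * Real.cosh (α - β) ∧
    (Real.cosh r = (1 - t) * Real.cosh (α + β) + t * Real.cosh (α - β) →
      t = 0 ∨ t = 1 ∨ α * β = 0) := by
  have hp : ((α + β) ^ 2 : ℝ) ∈ Set.Ici (0:ℝ) := Set.mem_Ici.2 (by positivity)
  have hq : ((α - β) ^ 2 : ℝ) ∈ Set.Ici (0:ℝ) := Set.mem_Ici.2 (by positivity)
  have h1 : Real.cosh r = Real.cosh (Real.sqrt ((1 - t) * (α + β) ^ 2 + t * (α - β) ^ 2)) := by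
    rw [← hr, cosh_sq_arg]
  have h2 : Real.cosh (α + β) = Real.cosh (Real.sqrt ((α + β) ^ 2)) := (cosh_sq_arg _).symm
  have h3 : Real.cosh (α - β) = Real.cosh (Real.sqrt ((α - β) ^ 2)) := (cosh_sq_arg _).symm
  constructor
  · have := strictConvexOn_cosh_sqrt.convexOn.2 hp hq (show (0:ℝ) ≤ 1 - t by linarith) ht0 (show (1:ℝ) - t + t = 1 by ring)
    rw [h1, h2, h3]
    simpa using this
  · intro heq
    by_cases ht0' : t = 0
    · exact Or.inl ht0'
    by_cases ht1' : t = 1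
    · exact Or.inr (Or.inl ht1')
    right; right
    by_contra hab
    have hne : ((α + β) ^ 2 : ℝ) ≠ (α - β) ^ 2 := by
      intro h
      apply hab
      nlinarith [h]
    have hst : (0:ℝ) < 1 - t := lt_of_le_of_ne (by linarith) (fun h => ht1' (by linarith))
    have hst2 : (0:ℝ) < t := lt_of_le_of_ne ht0 (Ne.symm ht0')
    have := strictConvexOn_cosh_sqrt.2 hp hq hne hst hst2 (show (1:ℝ) - t + t = 1 by ring)
    rw [h1, h2, h3] at heq
    simp only [smul_eq_mul] at this
    linarith [heq, this]

lemma core2 (d0 d1 e0 e1 m0 m1 t : ℝ) (ht0 : 0 ≤ t) (ht1 : t ≤ 1)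
    (hsum : m0 + m1 = d0 + d1 + e0 + e1)
    (hprod : m0 * m1 = (d0 + e0) * (d1 + e1) + t * (d0 - d1) * (e0 - e1)) :
    Real.exp m0 + Real.exp m1
      ≤ (1 - t) * (Real.exp (d0 + e0) + Real.exp (d1 + e1))
        + t * (Real.exp (d0 + e1) + Real.exp (d1 + e0)) ∧
    (Real.exp m0 + Real.exp m1
        = (1 - t) * (Real.exp (d0 + e0) + Real.exp (d1 + e1))
          + t * (Real.exp (d0 + e1) + Real.exp (d1 + e0)) →
      t = 0 ∨ t = 1 ∨ d0 = d1 ∨ e0 = e1) := by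
  set s : ℝ := (m0 + m1) / 2 with hs
  set r : ℝ := (m0 - m1) / 2 with hrdef
  set α : ℝ := (d0 - d1) / 2 with hα
  set β : ℝ := (e0 - e1) / 2 with hβ
  have hm0 : m0 = s + r := by rw [hs, hrdef]; ring
  have hm1 : m1 = s - r := by rw [hs, hrdef]; ring
  have hd0e0 : d0 + e0 = s + (α + β) := by rw [hs, hα, hβ]; linarith [hsum]
  have hd1e1 : d1 + e1 = s - (α + β) := by rw [hs, hα, hβ]; linarith [hsum]
  have hd0e1 : d0 + e1 = s + (α - β) := by rw [hs, hα, hβ]; linarith [hsum]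
  have hd1e0 : d1 + e0 = s - (α - β) := by rw [hs, hα, hβ]; linarith [hsum]
  have hr2 : r ^ 2 = (1 - t) * (α + β) ^ 2 + t * (α - β) ^ 2 := by
    rw [hrdef, hα, hβ]
    linear_combination ((m0 + m1 + d0 + d1 + e0 + e1) / 4) * hsum - hprod
  obtain ⟨hle, heqcase⟩ := core_ineq α β t r ht0 ht1 hr2
  have hexps : 0 < Real.exp s := Real.exp_pos s
  have key : ∀ a : ℝ,
      Real.exp (s + a) + Real.exp (s - a) = Real.exp s * (2 * Real.cosh a) := by
    intro a
    rw [Real.cosh_eq, Real.exp_add, Real.exp_sub, Real.exp_neg]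
    have := (Real.exp_pos a).ne'
    field_simp
  have lhs_eq : Real.exp m0 + Real.exp m1 = Real.exp s * (2 * Real.cosh r) := by
    rw [hm0, hm1, key]
  have rhs_eq : (1 - t) * (Real.exp (d0 + e0) + Real.exp (d1 + e1))
        + t * (Real.exp (d0 + e1) + Real.exp (d1 + e0))
      = Real.exp s * (2 * ((1 - t) * Real.cosh (α + β) + t * Real.cosh (α - β))) := by
    rw [hd0e0, hd1e1, hd0e1, hd1e0, key, key]
    ring
  constructor
  · rw [lhs_eq, rhs_eq]
    have h2 : (2:ℝ) * Real.cosh r ≤ 2 * ((1 - t) * Real.cosh (α + β) + t * Real.cosh (α - β)) := by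
      linarith
    exact mul_le_mul_of_nonneg_left h2 hexps.le
  · intro heq
    rw [lhs_eq, rhs_eq] at heq
    have h2 : Real.cosh r = (1 - t) * Real.cosh (α + β) + t * Real.cosh (α - β) := by
      have := mul_left_cancel₀ hexps.ne' heq
      linarith
    rcases heqcase h2 with h | h | h
    · exact Or.inl h
    · exact Or.inr (Or.inl h)
    · rcases mul_eq_zero.1 h with h' | h'
      · exact Or.inr (Or.inr (Or.inl (by rw [hα] at h'; linarith)))
      · exact Or.inr (Or.inr (Or.inr (by rw [hβ] at h'; linarith)))

lemma mexp_hermitian {n : ℕ} {A : Matrix (Fin n) (Fin n) ℂ} (hA : A.IsHermitian) :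
    mexp A = (hA.eigenvectorUnitary : Matrix (Fin n) (Fin n) ℂ)
      * diagonal (fun i => (Real.exp (hA.eigenvalues i) : ℂ))
      * star (hA.eigenvectorUnitary : Matrix (Fin n) (Fin n) ℂ) := by
  set U : Matrix (Fin n) (Fin n) ℂ := (hA.eigenvectorUnitary : Matrix (Fin n) (Fin n) ℂ) with hU
  have hU2 : U * star U = 1 := Matrix.mem_unitaryGroup_iff.mp hA.eigenvectorUnitary.2
  have hU1 : star U * U = 1 := Matrix.mem_unitaryGroup_iff'.mp hA.eigenvectorUnitary.2
  have hUunit : IsUnit U := ⟨⟨U, star U, hU2, hU1⟩, rfl⟩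
  have hUinv : U⁻¹ = star U := Matrix.inv_eq_right_inv hU2
  have h1 : A = U * diagonal (RCLike.ofReal ∘ hA.eigenvalues) * U⁻¹ := by
    rw [hUinv]; exact hA.spectral_theorem
  have hfun : NormedSpace.exp (RCLike.ofReal ∘ hA.eigenvalues)
      = fun i => (Real.exp (hA.eigenvalues i) : ℂ) := by
    funext i
    rw [Pi.coe_exp _ _, ← Complex.exp_eq_exp_ℂ]
    exact (Complex.ofReal_exp _).symm
  rw [mexp]
  conv_lhs => rw [h1]
  rw [Matrix.exp_conj U _ hUunit, Matrix.exp_diagonal, hUinv, hfun]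

lemma comm_of_diag (U : Matrix (Fin 2) (Fin 2) ℂ) (hU2 : U * star U = 1)
    (a b : Fin 2 → ℂ) :
    (U * diagonal a * star U) * (U * diagonal b * star U)
      = (U * diagonal b * star U) * (U * diagonal a * star U) := by
  have hU1 : star U * U = 1 := mul_eq_one_comm.mp hU2
  have key : ∀ f g : Fin 2 → ℂ,
      (U * diagonal f * star U) * (U * diagonal g * star U)
        = U * diagonal (fun i => f i * g i) * star U := by
    intro f g
    have h1 : star U * (U * (diagonal g * star U)) = diagonal g * star U := by
      rw [← Matrix.mul_assoc, hU1, Matrix.one_mul]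
    calc (U * diagonal f * star U) * (U * diagonal g * star U)
        = U * (diagonal f * (star U * (U * (diagonal g * star U)))) := by
          simp only [Matrix.mul_assoc]
      _ = U * (diagonal f * (diagonal g * star U)) := by rw [h1]
      _ = U * ((diagonal f * diagonal g) * star U) := by rw [Matrix.mul_assoc]
      _ = U * diagonal (fun i => f i * g i) * star U := by
          rw [Matrix.diagonal_mul_diagonal, Matrix.mul_assoc]
  rw [key, key]
  have : (fun i => a i * b i) = fun i => b i * a i := by funext i; ring
  rw [this]

set_option maxHeartbeats 2000000 in
/-- Golden–Thompson-type determinant inequality for 2×2 Hermitian matrices: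
both `det(I + e^{X/2} e^{Y} e^{X/2})` and `det(I + e^{X+Y})` are positive reals,
`det(I + e^{X+Y}) ≤ det(I + e^{X/2} e^{Y} e^{X/2})`, with equality iff `XY = YX`. -/
theorem stmt19 (X Y : Matrix (Fin 2) (Fin 2) ℂ)
    (hX : X.IsHermitian) (hY : Y.IsHermitian) :
    0 < (Matrix.det (1 + mexp ((1/2 : ℝ) • X) * mexp Y * mexp ((1/2 : ℝ) • X))).re ∧
    (Matrix.det (1 + mexp ((1/2 : ℝ) • X) * mexp Y * mexp ((1/2 : ℝ) • X))).im = 0 ∧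
    0 < (Matrix.det (1 + mexp (X + Y))).re ∧
    (Matrix.det (1 + mexp (X + Y))).im = 0 ∧
    (Matrix.det (1 + mexp (X + Y))).re
      ≤ (Matrix.det (1 + mexp ((1/2 : ℝ) • X) * mexp Y * mexp ((1/2 : ℝ) • X))).re ∧
    ((Matrix.det (1 + mexp ((1/2 : ℝ) • X) * mexp Y * mexp ((1/2 : ℝ) • X))).re
        = (Matrix.det (1 + mexp (X + Y))).re ↔ X * Y = Y * X) := by
  classical
  have hXY : (X + Y).IsHermitian := hX.add hY
  set U : Matrix (Fin 2) (Fin 2) ℂ := (hX.eigenvectorUnitary : Matrix (Fin 2) (Fin 2) ℂ)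
    with hUdef
  set V : Matrix (Fin 2) (Fin 2) ℂ := (hY.eigenvectorUnitary : Matrix (Fin 2) (Fin 2) ℂ)
    with hVdef
  set S : Matrix (Fin 2) (Fin 2) ℂ := (hXY.eigenvectorUnitary : Matrix (Fin 2) (Fin 2) ℂ)
    with hSdef
  set d : Fin 2 → ℝ := hX.eigenvalues with hddef
  set e : Fin 2 → ℝ := hY.eigenvalues with hedef
  set m : Fin 2 → ℝ := hXY.eigenvalues with hmdef
  have hU2 : U * star U = 1 := Matrix.mem_unitaryGroup_iff.mp hX.eigenvectorUnitary.2
  have hU1 : star U * U = 1 := Matrix.mem_unitaryGroup_iff'.mp hX.eigenvectorUnitary.2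
  have hV2 : V * star V = 1 := Matrix.mem_unitaryGroup_iff.mp hY.eigenvectorUnitary.2
  have hV1 : star V * V = 1 := Matrix.mem_unitaryGroup_iff'.mp hY.eigenvectorUnitary.2
  have hS2 : S * star S = 1 := Matrix.mem_unitaryGroup_iff.mp hXY.eigenvectorUnitary.2
  have hS1 : star S * S = 1 := Matrix.mem_unitaryGroup_iff'.mp hXY.eigenvectorUnitary.2
  set W : Matrix (Fin 2) (Fin 2) ℂ := star U * V with hWdef
  have hsW : star W = star V * U := by rw [hWdef, StarMul.star_mul, star_star]
  have hWW : W * star W = 1 := by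
    rw [hWdef, hsW, Matrix.mul_assoc, ← Matrix.mul_assoc V, hV2, Matrix.one_mul, hU1]
  have hWW' : star W * W = 1 := by
    rw [hWdef, hsW, Matrix.mul_assoc, ← Matrix.mul_assoc U, hU2, Matrix.one_mul, hV1]
  -- entry relations
  have r5 : W 0 0 * (starRingEnd ℂ) (W 0 0) + W 0 1 * (starRingEnd ℂ) (W 0 1) = 1 := by
    have h := congrArg (fun M : Matrix (Fin 2) (Fin 2) ℂ => M 0 0) hWW
    simpa [Matrix.mul_apply, Fin.sum_univ_two, Matrix.conjTranspose_apply,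
      Matrix.one_apply] using h
  have r1 : (starRingEnd ℂ) (W 0 0) * W 0 0 + (starRingEnd ℂ) (W 1 0) * W 1 0 = 1 := by
    have h := congrArg (fun M : Matrix (Fin 2) (Fin 2) ℂ => M 0 0) hWW'
    simpa [Matrix.mul_apply, Fin.sum_univ_two, Matrix.conjTranspose_apply,
      Matrix.one_apply] using h
  have r3 : (starRingEnd ℂ) (W 0 1) * W 0 1 + (starRingEnd ℂ) (W 1 1) * W 1 1 = 1 := by
    have h := congrArg (fun M : Matrix (Fin 2) (Fin 2) ℂ => M 1 1) hWW'
    simpa [Matrix.mul_apply, Fin.sum_univ_two, Matrix.conjTranspose_apply,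
      Matrix.one_apply] using h
  have r6 : W 0 0 * (starRingEnd ℂ) (W 1 0) + W 0 1 * (starRingEnd ℂ) (W 1 1) = 0 := by
    have h := congrArg (fun M : Matrix (Fin 2) (Fin 2) ℂ => M 0 1) hWW
    simpa [Matrix.mul_apply, Fin.sum_univ_two, Matrix.conjTranspose_apply,
      Matrix.one_apply] using h
  have r7 : W 1 0 * (starRingEnd ℂ) (W 0 0) + W 1 1 * (starRingEnd ℂ) (W 0 1) = 0 := by
    have h := congrArg (fun M : Matrix (Fin 2) (Fin 2) ℂ => M 1 0) hWW
    simpa [Matrix.mul_apply, Fin.sum_univ_two, Matrix.conjTranspose_apply,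
      Matrix.one_apply] using h
  set t : ℝ := Complex.normSq (W 0 1) with htdef
  have hτ : W 0 1 * (starRingEnd ℂ) (W 0 1) = (t : ℂ) := Complex.mul_conj _
  have h00 : W 0 0 * (starRingEnd ℂ) (W 0 0) = 1 - (t : ℂ) := by linear_combination r5 - hτ
  have h10 : W 1 0 * (starRingEnd ℂ) (W 1 0) = (t : ℂ) := by linear_combination r1 - h00
  have h11 : W 1 1 * (starRingEnd ℂ) (W 1 1) = 1 - (t : ℂ) := by linear_combination r3 - hτ
  have hC1 : W 0 0 * (starRingEnd ℂ) (W 1 0) * (W 1 1 * (starRingEnd ℂ) (W 0 1))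
      = -((t : ℂ) * (1 - t)) := by
    linear_combination (W 1 1 * (starRingEnd ℂ) (W 0 1)) * r6
      - (W 1 1 * (starRingEnd ℂ) (W 1 1)) * hτ - (t : ℂ) * h11
  have hC2 : W 1 0 * (starRingEnd ℂ) (W 0 0) * (W 0 1 * (starRingEnd ℂ) (W 1 1))
      = -((t : ℂ) * (1 - t)) := by
    linear_combination (W 0 1 * (starRingEnd ℂ) (W 1 1)) * r7
      - (W 1 1 * (starRingEnd ℂ) (W 1 1)) * hτ - (t : ℂ) * h11
  have ht0 : 0 ≤ t := Complex.normSq_nonneg _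
  have h00' : Complex.normSq (W 0 0) = 1 - t := by
    have h := h00
    rw [Complex.mul_conj] at h
    exact_mod_cast h
  have h11' : Complex.normSq (W 1 1) = 1 - t := by
    have h := h11
    rw [Complex.mul_conj] at h
    exact_mod_cast h
  have h10' : Complex.normSq (W 1 0) = t := by
    have h := h10
    rw [Complex.mul_conj] at h
    exact_mod_cast h
  have ht1 : t ≤ 1 := by linarith [Complex.normSq_nonneg (W 0 0), h00']
  -- spectral decompositions
  have hXspec : X = U * diagonal (fun i => ((d i : ℝ) : ℂ)) * star U := hX.spectral_theorem
  have hYspec : Y = V * diagonal (fun i => ((e i : ℝ) : ℂ)) * star V := hY.spectral_theorem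
  have hexpX : mexp X = U * diagonal (fun i => (Real.exp (d i) : ℂ)) * star U :=
    mexp_hermitian hX
  have hexpY : mexp Y = V * diagonal (fun i => (Real.exp (e i) : ℂ)) * star V :=
    mexp_hermitian hY
  have hexpXY : mexp (X + Y) = S * diagonal (fun i => (Real.exp (m i) : ℂ)) * star S :=
    mexp_hermitian hXY
  -- half-exponential
  have hhalfsum : (1/2 : ℝ) • X + (1/2 : ℝ) • X = X := by
    rw [← add_smul]; norm_num
  have hhalf : mexp ((1/2 : ℝ) • X) * mexp ((1/2 : ℝ) • X) = mexp X := by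
    unfold mexp
    rw [← Matrix.exp_add_of_commute _ _ (Commute.refl _), hhalfsum]
  set N : Matrix (Fin 2) (Fin 2) ℂ :=
    diagonal (fun i => (Real.exp (d i) : ℂ)) * W * diagonal (fun i => (Real.exp (e i) : ℂ))
      * star W with hNdef
  have hdetA1 : (1 + mexp ((1/2 : ℝ) • X) * mexp Y * mexp ((1/2 : ℝ) • X)).det
      = (1 + N).det := by
    rw [Matrix.det_one_add_mul_comm, ← Matrix.mul_assoc, hhalf]
    have hfact : mexp X * mexp Y
        = U * (diagonal (fun i => (Real.exp (d i) : ℂ)) * W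
            * diagonal (fun i => (Real.exp (e i) : ℂ)) * star V) := by
      rw [hexpX, hexpY, hWdef]
      simp only [Matrix.mul_assoc]
    rw [hfact, Matrix.det_one_add_mul_comm, Matrix.mul_assoc _ (star V) U, ← hsW, hNdef]
  have hdetN : N.det
      = ((Real.exp (d 0) * Real.exp (d 1) * Real.exp (e 0) * Real.exp (e 1) : ℝ) : ℂ) := by
    have hWdet : W.det * (star W).det = 1 := by rw [← Matrix.det_mul, hWW, Matrix.det_one]
    rw [hNdef, Matrix.det_mul, Matrix.det_mul, Matrix.det_mul, Matrix.det_diagonal,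
      Matrix.det_diagonal, Fin.prod_univ_two, Fin.prod_univ_two]
    push_cast [← Complex.ofReal_exp]
    linear_combination ((Real.exp (d 0) : ℂ) * (Real.exp (d 1) : ℂ) * (Real.exp (e 0) : ℂ)
      * (Real.exp (e 1) : ℂ)) * hWdet
  have htr : N 0 0 + N 1 1
      = (((1 - t) * (Real.exp (d 0) * Real.exp (e 0) + Real.exp (d 1) * Real.exp (e 1))
          + t * (Real.exp (d 0) * Real.exp (e 1) + Real.exp (d 1) * Real.exp (e 0)) : ℝ) : ℂ) := by
    rw [hNdef]
    simp only [Matrix.mul_apply, Matrix.diagonal_apply, Fin.sum_univ_two,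
      Matrix.conjTranspose_apply, Matrix.star_apply, RCLike.star_def]
    push_cast [← Complex.ofReal_exp]
    simp only [Fin.isValue, ite_true, ite_false, if_true, if_false, one_ne_zero, zero_ne_one,
      reduceIte, mul_zero, zero_mul, add_zero, zero_add, mul_one, one_mul]
    linear_combination ((Real.exp (d 0) : ℂ) * (Real.exp (e 0) : ℂ)) * h00
      + ((Real.exp (d 0) : ℂ) * (Real.exp (e 1) : ℂ)) * hτ
      + ((Real.exp (d 1) : ℂ) * (Real.exp (e 0) : ℂ)) * h10
      + ((Real.exp (d 1) : ℂ) * (Real.exp (e 1) : ℂ)) * h11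
  have hdet1N : (1 + N).det = 1 + (N 0 0 + N 1 1) + N.det := by
    simp [Matrix.det_fin_two, Matrix.add_apply, Matrix.one_apply]
    ring
  set G : ℝ := Real.exp (d 0) * Real.exp (d 1) * Real.exp (e 0) * Real.exp (e 1) with hGdef
  set TA : ℝ := (1 - t) * (Real.exp (d 0) * Real.exp (e 0) + Real.exp (d 1) * Real.exp (e 1))
      + t * (Real.exp (d 0) * Real.exp (e 1) + Real.exp (d 1) * Real.exp (e 0)) with hTAdef
  have hdetA : (1 + mexp ((1/2 : ℝ) • X) * mexp Y * mexp ((1/2 : ℝ) • X)).det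
      = ((1 + TA + G : ℝ) : ℂ) := by
    rw [hdetA1, hdet1N, htr, hdetN]
    push_cast [← Complex.ofReal_exp]
    ring
  -- B side
  have hdetB : (1 + mexp (X + Y)).det
      = ((1 + (Real.exp (m 0) + Real.exp (m 1))
          + Real.exp (m 0) * Real.exp (m 1) : ℝ) : ℂ) := by
    rw [hexpXY, Matrix.mul_assoc, Matrix.det_one_add_mul_comm, Matrix.mul_assoc, hS1,
      Matrix.mul_one]
    simp [Matrix.det_fin_two, Matrix.add_apply, Matrix.one_apply, Matrix.diagonal_apply]
    push_cast [← Complex.ofReal_exp]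
    ring
  -- constraints
  have hsum : m 0 + m 1 = d 0 + d 1 + e 0 + e 1 := by
    have trX : X.trace = ((d 0 + d 1 : ℝ) : ℂ) := by
      conv_lhs => rw [hXspec]
      rw [Matrix.trace_mul_cycle, hU1, Matrix.one_mul]
      simp [Matrix.trace, Fin.sum_univ_two]
    have trY : Y.trace = ((e 0 + e 1 : ℝ) : ℂ) := by
      conv_lhs => rw [hYspec]
      rw [Matrix.trace_mul_cycle, hV1, Matrix.one_mul]
      simp [Matrix.trace, Fin.sum_univ_two]
    have trXY : (X + Y).trace = ((m 0 + m 1 : ℝ) : ℂ) := by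
      conv_lhs => rw [show X + Y = S * diagonal (fun i => ((m i : ℝ) : ℂ)) * star S from hXY.spectral_theorem]
      rw [Matrix.trace_mul_cycle, hS1, Matrix.one_mul]
      simp [Matrix.trace, Fin.sum_univ_two]
    have h := trXY
    rw [Matrix.trace_add, trX, trY] at h
    have h' : d 0 + d 1 + (e 0 + e 1) = m 0 + m 1 := by exact_mod_cast h
    linarith
  have hV : V = U * W := by rw [hWdef, ← Matrix.mul_assoc, hU2, Matrix.one_mul]
  have hYalt : Y = U * (W * diagonal (fun i => ((e i : ℝ) : ℂ)) * star W) * star U := by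
    have key : U * (W * diagonal (fun i => ((e i : ℝ) : ℂ)) * star W) * star U
        = V * diagonal (fun i => ((e i : ℝ) : ℂ)) * star V := by
      rw [hWdef, hsW]
      simp only [Matrix.mul_assoc]
      rw [hU2, Matrix.mul_one, ← Matrix.mul_assoc U (star U), hU2, Matrix.one_mul]
    rw [hYspec, key]
  have hprodm : m 0 * m 1 = (d 0 + e 0) * (d 1 + e 1) + t * (d 0 - d 1) * (e 0 - e 1) := by
    have hdXY : (X + Y).det = ((m 0 * m 1 : ℝ) : ℂ) := by
      rw [hXY.det_eq_prod_eigenvalues, Fin.prod_univ_two, ← hmdef]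
      norm_cast
    have hXYalt : X + Y = U * (diagonal (fun i => ((d i : ℝ) : ℂ))
        + W * diagonal (fun i => ((e i : ℝ) : ℂ)) * star W) * star U := by
      conv_lhs => rw [hXspec, hYalt]
      rw [Matrix.mul_add, Matrix.add_mul]
    have hUdet : U.det * (star U).det = 1 := by rw [← Matrix.det_mul, hU2, Matrix.det_one]
    have hdet2 : (X + Y).det = (diagonal (fun i => ((d i : ℝ) : ℂ))
        + W * diagonal (fun i => ((e i : ℝ) : ℂ)) * star W).det := by
      rw [hXYalt, Matrix.det_mul, Matrix.det_mul]
      linear_combination (diagonal (fun i => ((d i : ℝ) : ℂ))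
        + W * diagonal (fun i => ((e i : ℝ) : ℂ)) * star W).det * hUdet
    have hdet3 : (diagonal (fun i => ((d i : ℝ) : ℂ))
        + W * diagonal (fun i => ((e i : ℝ) : ℂ)) * star W).det
        = (((d 0 + e 0) * (d 1 + e 1) + t * (d 0 - d 1) * (e 0 - e 1) : ℝ) : ℂ) := by
      simp only [Matrix.det_fin_two, Matrix.add_apply, Matrix.mul_apply,
        Matrix.diagonal_apply, Fin.sum_univ_two, Matrix.conjTranspose_apply,
        Matrix.star_apply, RCLike.star_def]
      push_cast [← Complex.ofReal_exp]
      simp only [Fin.isValue, ite_true, ite_false, if_true, if_false, one_ne_zero, zero_ne_one,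
        reduceIte, mul_zero, zero_mul, add_zero, zero_add, mul_one, one_mul]
      linear_combination ((e 0 : ℂ) * ((d 1 : ℂ) + (e 1 : ℂ) * (W 1 1 * (starRingEnd ℂ) (W 1 1)))) * h00
        + ((e 1 : ℂ) * ((d 1 : ℂ) + (e 0 : ℂ) * (W 1 0 * (starRingEnd ℂ) (W 1 0)))) * hτ
        + ((e 0 : ℂ) * ((d 0 : ℂ) + (e 1 : ℂ) * (t : ℂ))) * h10
        + ((e 1 : ℂ) * ((d 0 : ℂ) + (e 0 : ℂ) * (1 - (t : ℂ)))) * h11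
        - (e 0 : ℂ) * (e 1 : ℂ) * hC1 - (e 0 : ℂ) * (e 1 : ℂ) * hC2
    have h := hdXY
    rw [hdet2, hdet3] at h
    exact_mod_cast h.symm
  obtain ⟨hle, heqc⟩ := core2 (d 0) (d 1) (e 0) (e 1) (m 0) (m 1) t ht0 ht1 hsum hprodm
  have hexpadd : ∀ a b : ℝ, Real.exp (a + b) = Real.exp a * Real.exp b := Real.exp_add
  have hleTA : Real.exp (m 0) + Real.exp (m 1) ≤ TA := by
    rw [hTAdef]
    calc Real.exp (m 0) + Real.exp (m 1) ≤ _ := hle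
    _ = _ := by rw [hexpadd, hexpadd, hexpadd, hexpadd]
  have hGm : Real.exp (m 0) * Real.exp (m 1) = G := by
    rw [hGdef, ← Real.exp_add, hsum, Real.exp_add, Real.exp_add, Real.exp_add]
  have hTApos : 0 < TA := by
    rw [hTAdef]
    have hA : 0 < Real.exp (d 0) * Real.exp (e 0) + Real.exp (d 1) * Real.exp (e 1) := by
      positivity
    have hB : 0 < Real.exp (d 0) * Real.exp (e 1) + Real.exp (d 1) * Real.exp (e 0) := by
      positivity
    rcases le_total (Real.exp (d 0) * Real.exp (e 0) + Real.exp (d 1) * Real.exp (e 1))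
        (Real.exp (d 0) * Real.exp (e 1) + Real.exp (d 1) * Real.exp (e 0)) with h | h
    · nlinarith [mul_le_mul_of_nonneg_left h ht0]
    · nlinarith [mul_le_mul_of_nonneg_left h (by linarith : (0:ℝ) ≤ 1 - t)]
  have hGpos : 0 < G := by
    rw [hGdef]; positivity
  refine ⟨?_, ?_, ?_, ?_, ?_, ?_⟩
  · rw [hdetA, Complex.ofReal_re]; linarith
  · rw [hdetA, Complex.ofReal_im]
  · rw [hdetB, Complex.ofReal_re]
    nlinarith [Real.exp_pos (m 0), Real.exp_pos (m 1),
      mul_pos (Real.exp_pos (m 0)) (Real.exp_pos (m 1))]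
  · rw [hdetB, Complex.ofReal_im]
  · rw [hdetA, hdetB, Complex.ofReal_re, Complex.ofReal_re]
    rw [hGm]
    linarith
  · constructor
    · intro heq
      rw [hdetA, hdetB, Complex.ofReal_re, Complex.ofReal_re, hGm] at heq
      have hTeq : Real.exp (m 0) + Real.exp (m 1)
          = (1 - t) * (Real.exp (d 0 + e 0) + Real.exp (d 1 + e 1))
            + t * (Real.exp (d 0 + e 1) + Real.exp (d 1 + e 0)) := by
        rw [hexpadd, hexpadd, hexpadd, hexpadd]
        rw [hTAdef] at heq
        linarith
      rcases heqc hTeq with ht | ht | hde | hde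
      · -- t = 0 : W is diagonal
        have hw01 : W 0 1 = 0 := by
          have h : Complex.normSq (W 0 1) = 0 := by rw [← htdef, ht]
          exact Complex.normSq_eq_zero.mp h
        have hw10 : W 1 0 = 0 := by
          have h : Complex.normSq (W 1 0) = 0 := by rw [h10', ht]
          exact Complex.normSq_eq_zero.mp h
        have h00c : W 0 0 * (starRingEnd ℂ) (W 0 0) = 1 := by rw [h00, ht]; norm_num
        have h11c : W 1 1 * (starRingEnd ℂ) (W 1 1) = 1 := by rw [h11, ht]; norm_num
        have hWE : W * diagonal (fun i => ((e i : ℝ) : ℂ)) * star W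
            = diagonal (fun i => ((e i : ℝ) : ℂ)) := by
          ext i j
          fin_cases i <;> fin_cases j <;>
            simp [Matrix.mul_apply, Matrix.diagonal_apply, Fin.sum_univ_two,
              Matrix.conjTranspose_apply, Matrix.star_apply, RCLike.star_def, hw01, hw10]
          · linear_combination (e 0 : ℂ) * h00c
          · linear_combination (e 1 : ℂ) * h11c
        have hY' : Y = U * diagonal (fun i => ((e i : ℝ) : ℂ)) * star U := by
          rw [hYalt, hWE]
        rw [hXspec, hY']
        exact comm_of_diag U hU2 _ _
      · -- t = 1 : W is antidiagonal
        have hw00 : W 0 0 = 0 := by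
          have h : Complex.normSq (W 0 0) = 0 := by rw [h00', ht]; ring
          exact Complex.normSq_eq_zero.mp h
        have hw11 : W 1 1 = 0 := by
          have h : Complex.normSq (W 1 1) = 0 := by rw [h11', ht]; ring
          exact Complex.normSq_eq_zero.mp h
        have hτc : W 0 1 * (starRingEnd ℂ) (W 0 1) = 1 := by rw [hτ, ht]; norm_num
        have h10c : W 1 0 * (starRingEnd ℂ) (W 1 0) = 1 := by rw [h10, ht]; norm_num
        have hWE : W * diagonal (fun i => ((e i : ℝ) : ℂ)) * star W
            = diagonal (fun i : Fin 2 => if i = 0 then ((e 1 : ℝ) : ℂ) else ((e 0 : ℝ) : ℂ)) := by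
          ext i j
          fin_cases i <;> fin_cases j <;>
            simp [Matrix.mul_apply, Matrix.diagonal_apply, Fin.sum_univ_two,
              Matrix.conjTranspose_apply, Matrix.star_apply, RCLike.star_def, hw00, hw11]
          · linear_combination (e 1 : ℂ) * hτc
          · linear_combination (e 0 : ℂ) * h10c
        have hY' : Y = U * diagonal
            (fun i : Fin 2 => if i = 0 then ((e 1 : ℝ) : ℂ) else ((e 0 : ℝ) : ℂ)) * star U := by
          rw [hYalt, hWE]
        rw [hXspec, hY']
        exact comm_of_diag U hU2 _ _
      · -- d 0 = d 1 : X is scalar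
        have hdd : (fun i : Fin 2 => ((d i : ℝ) : ℂ)) = fun _ : Fin 2 => ((d 0 : ℝ) : ℂ) := by
          funext i
          fin_cases i
          · rfl
          · show ((d 1 : ℝ) : ℂ) = ((d 0 : ℝ) : ℂ)
            rw [hde]
        have hXscalar : X = ((d 0 : ℝ) : ℂ) • 1 := by
          rw [hXspec, hdd, ← Matrix.smul_one_eq_diagonal, mul_smul_comm, smul_mul_assoc,
            Matrix.mul_one, hU2]
        rw [hXscalar, smul_mul_assoc, mul_smul_comm, Matrix.one_mul, Matrix.mul_one]
      · -- e 0 = e 1 : Y is scalar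
        have hee : (fun i : Fin 2 => ((e i : ℝ) : ℂ)) = fun _ : Fin 2 => ((e 0 : ℝ) : ℂ) := by
          funext i
          fin_cases i
          · rfl
          · show ((e 1 : ℝ) : ℂ) = ((e 0 : ℝ) : ℂ)
            rw [hde]
        have hYscalar : Y = ((e 0 : ℝ) : ℂ) • 1 := by
          rw [hYspec, hee, ← Matrix.smul_one_eq_diagonal, mul_smul_comm, smul_mul_assoc,
            Matrix.mul_one, hV2]
        rw [hYscalar, mul_smul_comm, smul_mul_assoc, Matrix.one_mul, Matrix.mul_one]
    · intro hcomm
      have hc1 : Commute ((1/2 : ℝ) • X) Y := by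
        unfold Commute SemiconjBy
        rw [Matrix.smul_mul, Matrix.mul_smul, hcomm]
      have hc2 : Commute ((1/2 : ℝ) • X + Y) ((1/2 : ℝ) • X) :=
        Commute.add_left (Commute.refl _) hc1.symm
      have hAB : mexp ((1/2 : ℝ) • X) * mexp Y * mexp ((1/2 : ℝ) • X) = mexp (X + Y) := by
        unfold mexp
        rw [← Matrix.exp_add_of_commute _ _ hc1, ← Matrix.exp_add_of_commute _ _ hc2]
        congr 1
        rw [add_right_comm, hhalfsum]
      rw [hAB]
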